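/- The rings ℤ[τ₁,τ₂,τ₃,τ₄,γ₁,γ₂,γ₃,γ₄,ω]/(Q₁,Q₂,Q₃,Q₄,q₂,q₄,q₆,q₈,q₁₂) and ℤ[τ₁,τ₂,τ₃,τ₄,γ₁,γ₃,ω]/(r̄₁,r̄₂,r̄₃,r̄₄,r̄₆,r̄₈,r̄₁₂) are isomorphic as rings, where Qᵢ = eᵢ(τ) - 2γᵢ (i=1,2,3), Q₄ = e₄(τ) - 2γ₄ - ω, q₂ = γ₂ - γ₁², q₄ = γ₄ - 2γ₁γ₃ + γ₂² - ω, q₆ = 2γ₂γ₄ - γ₃² + γ₂ω, q₈ = γ₄² + γ₄ω + ω², q₁₂ = ω³, and r̄₁ = 2γ₁ - e₁(τ), r̄₂ = 2γ₁² - e₂(τ), r̄₃ = 2γ₃ - e₃(τ), r̄₄ = e₄(τ) - 2γ₁e₃(τ) + 2γ₁⁴ - 3ω, r̄₆ = -γ₁²e₄(τ) + γ₃², r̄₈ = 3e₄(τ)γ₁⁴ - γ₁⁸ + 3ω(ω + e₃(τ)γ₁), r̄₁₂ = ω³. -/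

import Mathlib

open MvPolynomial

/-- A = ℤ[τ₁,…,τ₄,γ₁,γ₂,γ₃,γ₄,ω]: variables 0–3 are τ₁,…,τ₄,
4–7 are γ₁,…,γ₄, 8 is ω. -/
noncomputable abbrev A9 := MvPolynomial (Fin 9) ℤ

noncomputable def Ae1τ : A9 := X 0 + X 1 + X 2 + X 3
noncomputable def Ae2τ : A9 :=
  X 0 * X 1 + X 0 * X 2 + X 0 * X 3 + X 1 * X 2 + X 1 * X 3 + X 2 * X 3
noncomputable def Ae3τ : A9 :=
  X 0 * X 1 * X 2 + X 0 * X 1 * X 3 + X 0 * X 2 * X 3 + X 1 * X 2 * X 3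
noncomputable def Ae4τ : A9 := X 0 * X 1 * X 2 * X 3

noncomputable def IA : Ideal A9 := Ideal.span
  { Ae1τ - 2 * X 4,                            -- Q₁
    Ae2τ - 2 * X 5,                            -- Q₂
    Ae3τ - 2 * X 6,                            -- Q₃
    Ae4τ - 2 * X 7 - X 8,                      -- Q₄
    X 5 - X 4 ^ 2,                             -- q₂
    X 7 - 2 * X 4 * X 6 + X 5 ^ 2 - X 8,       -- q₄
    2 * X 5 * X 7 - X 6 ^ 2 + X 5 * X 8,       -- q₆
    X 7 ^ 2 + X 7 * X 8 + X 8 ^ 2,             -- q₈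
    X 8 ^ 3 }                                  -- q₁₂

/-- B = ℤ[τ₁,…,τ₄,γ₁,γ₃,ω]: variables 0–3 are τ₁,…,τ₄, 4 is γ₁,
5 is γ₃, 6 is ω. -/
noncomputable abbrev B7 := MvPolynomial (Fin 7) ℤ

noncomputable def Be1τ : B7 := X 0 + X 1 + X 2 + X 3
noncomputable def Be2τ : B7 :=
  X 0 * X 1 + X 0 * X 2 + X 0 * X 3 + X 1 * X 2 + X 1 * X 3 + X 2 * X 3
noncomputable def Be3τ : B7 :=
  X 0 * X 1 * X 2 + X 0 * X 1 * X 3 + X 0 * X 2 * X 3 + X 1 * X 2 * X 3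
noncomputable def Be4τ : B7 := X 0 * X 1 * X 2 * X 3

noncomputable def JB : Ideal B7 := Ideal.span
  { 2 * X 4 - Be1τ,                                        -- r̄₁
    2 * X 4 ^ 2 - Be2τ,                                     -- r̄₂
    2 * X 5 - Be3τ,                                         -- r̄₃
    Be4τ - 2 * X 4 * Be3τ + 2 * X 4 ^ 4 - 3 * X 6,          -- r̄₄
    -(X 4 ^ 2 * Be4τ) + X 5 ^ 2,                            -- r̄₆
    3 * Be4τ * X 4 ^ 4 - X 4 ^ 8 + 3 * X 6 * (X 6 + Be3τ * X 4),  -- r̄₈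
    X 6 ^ 3 }                                               -- r̄₁₂

/-! ### The ring homomorphisms between the two polynomial rings -/

noncomputable def fAB : A9 →+* B7 :=
  eval₂Hom (Int.castRingHom B7)
    ![X 0, X 1, X 2, X 3, X 4, X 4 ^ 2, X 5, 2 * X 4 * X 5 - X 4 ^ 4 + X 6, X 6]

noncomputable def gBA : B7 →+* A9 :=
  eval₂Hom (Int.castRingHom A9) ![X 0, X 1, X 2, X 3, X 4, X 6, X 8]

lemma fX0 : fAB (X 0) = X 0 := by rw [fAB, eval₂Hom_X']; rfl
lemma fX1 : fAB (X 1) = X 1 := by rw [fAB, eval₂Hom_X']; rfl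
lemma fX2 : fAB (X 2) = X 2 := by rw [fAB, eval₂Hom_X']; rfl
lemma fX3 : fAB (X 3) = X 3 := by rw [fAB, eval₂Hom_X']; rfl
lemma fX4 : fAB (X 4) = X 4 := by rw [fAB, eval₂Hom_X']; rfl
lemma fX5 : fAB (X 5) = X 4 ^ 2 := by rw [fAB, eval₂Hom_X']; rfl
lemma fX6 : fAB (X 6) = X 5 := by rw [fAB, eval₂Hom_X']; rfl
lemma fX7 : fAB (X 7) = 2 * X 4 * X 5 - X 4 ^ 4 + X 6 := by rw [fAB, eval₂Hom_X']; rfl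
lemma fX8 : fAB (X 8) = X 6 := by rw [fAB, eval₂Hom_X']; rfl

lemma gX0 : gBA (X 0) = X 0 := by rw [gBA, eval₂Hom_X']; rfl
lemma gX1 : gBA (X 1) = X 1 := by rw [gBA, eval₂Hom_X']; rfl
lemma gX2 : gBA (X 2) = X 2 := by rw [gBA, eval₂Hom_X']; rfl
lemma gX3 : gBA (X 3) = X 3 := by rw [gBA, eval₂Hom_X']; rfl
lemma gX4 : gBA (X 4) = X 4 := by rw [gBA, eval₂Hom_X']; rfl
lemma gX5 : gBA (X 5) = X 6 := by rw [gBA, eval₂Hom_X']; rfl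
lemma gX6 : gBA (X 6) = X 8 := by rw [gBA, eval₂Hom_X']; rfl

/-! ### Membership of the generators -/

lemma memJ1 : (2 * X 4 - Be1τ) ∈ JB :=
  Ideal.subset_span (Set.mem_insert _ _)
lemma memJ2 : (2 * X 4 ^ 2 - Be2τ) ∈ JB :=
  Ideal.subset_span (Set.mem_insert_of_mem _ (Set.mem_insert _ _))
lemma memJ3 : (2 * X 5 - Be3τ) ∈ JB :=
  Ideal.subset_span (Set.mem_insert_of_mem _ (Set.mem_insert_of_mem _ (Set.mem_insert _ _)))
lemma memJ4 : (Be4τ - 2 * X 4 * Be3τ + 2 * X 4 ^ 4 - 3 * X 6) ∈ JB :=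
  Ideal.subset_span (Set.mem_insert_of_mem _ (Set.mem_insert_of_mem _
    (Set.mem_insert_of_mem _ (Set.mem_insert _ _))))
lemma memJ6 : (-(X 4 ^ 2 * Be4τ) + X 5 ^ 2) ∈ JB :=
  Ideal.subset_span (Set.mem_insert_of_mem _ (Set.mem_insert_of_mem _
    (Set.mem_insert_of_mem _ (Set.mem_insert_of_mem _ (Set.mem_insert _ _)))))
lemma memJ8 : (3 * Be4τ * X 4 ^ 4 - X 4 ^ 8 + 3 * X 6 * (X 6 + Be3τ * X 4)) ∈ JB :=
  Ideal.subset_span (Set.mem_insert_of_mem _ (Set.mem_insert_of_mem _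
    (Set.mem_insert_of_mem _ (Set.mem_insert_of_mem _ (Set.mem_insert_of_mem _
      (Set.mem_insert _ _))))))
lemma memJ12 : (X 6 ^ 3 : B7) ∈ JB :=
  Ideal.subset_span (Set.mem_insert_of_mem _ (Set.mem_insert_of_mem _
    (Set.mem_insert_of_mem _ (Set.mem_insert_of_mem _ (Set.mem_insert_of_mem _
      (Set.mem_insert_of_mem _ rfl))))))

lemma memI1 : (Ae1τ - 2 * X 4) ∈ IA :=
  Ideal.subset_span (Set.mem_insert _ _)
lemma memI2 : (Ae2τ - 2 * X 5) ∈ IA :=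
  Ideal.subset_span (Set.mem_insert_of_mem _ (Set.mem_insert _ _))
lemma memI3 : (Ae3τ - 2 * X 6) ∈ IA :=
  Ideal.subset_span (Set.mem_insert_of_mem _ (Set.mem_insert_of_mem _ (Set.mem_insert _ _)))
lemma memI4 : (Ae4τ - 2 * X 7 - X 8) ∈ IA :=
  Ideal.subset_span (Set.mem_insert_of_mem _ (Set.mem_insert_of_mem _
    (Set.mem_insert_of_mem _ (Set.mem_insert _ _))))
lemma memI5 : (X 5 - X 4 ^ 2 : A9) ∈ IA :=
  Ideal.subset_span (Set.mem_insert_of_mem _ (Set.mem_insert_of_mem _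
    (Set.mem_insert_of_mem _ (Set.mem_insert_of_mem _ (Set.mem_insert _ _)))))
lemma memI6 : (X 7 - 2 * X 4 * X 6 + X 5 ^ 2 - X 8 : A9) ∈ IA :=
  Ideal.subset_span (Set.mem_insert_of_mem _ (Set.mem_insert_of_mem _
    (Set.mem_insert_of_mem _ (Set.mem_insert_of_mem _ (Set.mem_insert_of_mem _
      (Set.mem_insert _ _))))))
lemma memI7 : (2 * X 5 * X 7 - X 6 ^ 2 + X 5 * X 8 : A9) ∈ IA :=
  Ideal.subset_span (Set.mem_insert_of_mem _ (Set.mem_insert_of_mem _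
    (Set.mem_insert_of_mem _ (Set.mem_insert_of_mem _ (Set.mem_insert_of_mem _
      (Set.mem_insert_of_mem _ (Set.mem_insert _ _)))))))
lemma memI8 : (X 7 ^ 2 + X 7 * X 8 + X 8 ^ 2 : A9) ∈ IA :=
  Ideal.subset_span (Set.mem_insert_of_mem _ (Set.mem_insert_of_mem _
    (Set.mem_insert_of_mem _ (Set.mem_insert_of_mem _ (Set.mem_insert_of_mem _
      (Set.mem_insert_of_mem _ (Set.mem_insert_of_mem _ (Set.mem_insert _ _))))))))
lemma memI9 : (X 8 ^ 3 : A9) ∈ IA :=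
  Ideal.subset_span (Set.mem_insert_of_mem _ (Set.mem_insert_of_mem _
    (Set.mem_insert_of_mem _ (Set.mem_insert_of_mem _ (Set.mem_insert_of_mem _
      (Set.mem_insert_of_mem _ (Set.mem_insert_of_mem _ (Set.mem_insert_of_mem _ rfl))))))))

/-- A handy combination rule. -/
lemma comb_mem {R : Type*} [CommRing R] {I : Ideal R} {a b : R}
    (ha : a ∈ I) (c : R) (hb : b ∈ I) : c * a + b ∈ I :=
  I.add_mem (I.mul_mem_left c ha) hb

lemma fe1 : fAB Ae1τ = Be1τ := by
  simp only [Ae1τ, Be1τ, map_add, fX0, fX1, fX2, fX3]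
lemma fe2 : fAB Ae2τ = Be2τ := by
  simp only [Ae2τ, Be2τ, map_add, map_mul, fX0, fX1, fX2, fX3]
lemma fe3 : fAB Ae3τ = Be3τ := by
  simp only [Ae3τ, Be3τ, map_add, map_mul, fX0, fX1, fX2, fX3]
lemma fe4 : fAB Ae4τ = Be4τ := by
  simp only [Ae4τ, Be4τ, map_mul, fX0, fX1, fX2, fX3]

lemma ge1 : gBA Be1τ = Ae1τ := by
  simp only [Ae1τ, Be1τ, map_add, gX0, gX1, gX2, gX3]
lemma ge2 : gBA Be2τ = Ae2τ := by
  simp only [Ae2τ, Be2τ, map_add, map_mul, gX0, gX1, gX2, gX3]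
lemma ge3 : gBA Be3τ = Ae3τ := by
  simp only [Ae3τ, Be3τ, map_add, map_mul, gX0, gX1, gX2, gX3]
lemma ge4 : gBA Be4τ = Ae4τ := by
  simp only [Ae4τ, Be4τ, map_mul, gX0, gX1, gX2, gX3]

lemma f_mem : IA ≤ JB.comap fAB := by
  rw [IA, Ideal.span_le]
  intro p hp
  simp only [Set.mem_insert_iff, Set.mem_singleton_iff] at hp
  rcases hp with rfl | rfl | rfl | rfl | rfl | rfl | rfl | rfl | rfl <;>
    refine Ideal.mem_comap.mpr ?_
  · have h : fAB (Ae1τ - 2 * X 4) = (-1 : B7) * (2 * X 4 - Be1τ) + 0 := by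
      simp only [map_sub, map_mul, map_ofNat, fe1, fX4]; ring
    rw [h]; exact comb_mem memJ1 _ JB.zero_mem
  · have h : fAB (Ae2τ - 2 * X 5) = (-1 : B7) * (2 * X 4 ^ 2 - Be2τ) + 0 := by
      simp only [map_sub, map_mul, map_ofNat, fe2, fX5]; ring
    rw [h]; exact comb_mem memJ2 _ JB.zero_mem
  · have h : fAB (Ae3τ - 2 * X 6) = (-1 : B7) * (2 * X 5 - Be3τ) + 0 := by
      simp only [map_sub, map_mul, map_ofNat, fe3, fX6]; ring
    rw [h]; exact comb_mem memJ3 _ JB.zero_mem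
  · have h : fAB (Ae4τ - 2 * X 7 - X 8) =
        (-(2 * X 4)) * (2 * X 5 - Be3τ)
          + (Be4τ - 2 * X 4 * Be3τ + 2 * X 4 ^ 4 - 3 * X 6) := by
      simp only [map_sub, map_mul, map_ofNat, fe4, fX7, fX8]; ring
    rw [h]; exact comb_mem memJ3 _ memJ4
  · have h : fAB (X 5 - X 4 ^ 2) = 0 := by
      simp only [map_sub, map_pow, fX5, fX4]; ring
    rw [h]; exact JB.zero_mem
  · have h : fAB (X 7 - 2 * X 4 * X 6 + X 5 ^ 2 - X 8) = 0 := by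
      simp only [map_sub, map_add, map_mul, map_pow, map_ofNat, fX4, fX5, fX6, fX7, fX8]; ring
    rw [h]; exact JB.zero_mem
  · have h : fAB (2 * X 5 * X 7 - X 6 ^ 2 + X 5 * X 8) =
        (-1 : B7) * (-(X 4 ^ 2 * Be4τ) + X 5 ^ 2)
          + ((-(X 4 ^ 2)) * (Be4τ - 2 * X 4 * Be3τ + 2 * X 4 ^ 4 - 3 * X 6)
          + ((2 * X 4 ^ 3) * (2 * X 5 - Be3τ) + 0)) := by
      simp only [map_sub, map_add, map_mul, map_pow, map_ofNat, fX4, fX5, fX6, fX7, fX8]; ring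
    rw [h]
    exact comb_mem memJ6 _ (comb_mem memJ4 _ (comb_mem memJ3 _ JB.zero_mem))
  · have h : fAB (X 7 ^ 2 + X 7 * X 8 + X 8 ^ 2) =
        (4 * X 4 ^ 2) * (-(X 4 ^ 2 * Be4τ) + X 5 ^ 2)
          + ((3 * X 4 * X 6 - 2 * X 4 ^ 5) * (2 * X 5 - Be3τ)
          + ((X 4 ^ 4) * (Be4τ - 2 * X 4 * Be3τ + 2 * X 4 ^ 4 - 3 * X 6)
          + (3 * Be4τ * X 4 ^ 4 - X 4 ^ 8 + 3 * X 6 * (X 6 + Be3τ * X 4)))) := by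
      simp only [map_add, map_mul, map_pow, fX4, fX7, fX8]; ring
    rw [h]
    exact comb_mem memJ6 _ (comb_mem memJ3 _ (comb_mem memJ4 _ memJ8))
  · have h : fAB (X 8 ^ 3) = X 6 ^ 3 := by simp only [map_pow, fX8]
    rw [h]; exact memJ12

lemma g_mem : JB ≤ IA.comap gBA := by
  rw [JB, Ideal.span_le]
  intro p hp
  simp only [Set.mem_insert_iff, Set.mem_singleton_iff] at hp
  rcases hp with rfl | rfl | rfl | rfl | rfl | rfl | rfl <;>
    refine Ideal.mem_comap.mpr ?_
  · have h : gBA (2 * X 4 - Be1τ) = (-1 : A9) * (Ae1τ - 2 * X 4) + 0 := by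
      simp only [map_sub, map_mul, map_ofNat, ge1, gX4]; ring
    rw [h]; exact comb_mem memI1 _ IA.zero_mem
  · have h : gBA (2 * X 4 ^ 2 - Be2τ) =
        (-1 : A9) * (Ae2τ - 2 * X 5) + ((-2 : A9) * (X 5 - X 4 ^ 2) + 0) := by
      simp only [map_sub, map_mul, map_pow, map_ofNat, ge2, gX4]; ring
    rw [h]; exact comb_mem memI2 _ (comb_mem memI5 _ IA.zero_mem)
  · have h : gBA (2 * X 5 - Be3τ) = (-1 : A9) * (Ae3τ - 2 * X 6) + 0 := by
      simp only [map_sub, map_mul, map_ofNat, ge3, gX5]; ring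
    rw [h]; exact comb_mem memI3 _ IA.zero_mem
  · have h : gBA (Be4τ - 2 * X 4 * Be3τ + 2 * X 4 ^ 4 - 3 * X 6) =
        (1 : A9) * (Ae4τ - 2 * X 7 - X 8)
          + ((-(2 * X 4)) * (Ae3τ - 2 * X 6)
          + ((2 : A9) * (X 7 - 2 * X 4 * X 6 + X 5 ^ 2 - X 8)
          + ((-(2 * (X 5 + X 4 ^ 2))) * (X 5 - X 4 ^ 2) + 0))) := by
      simp only [map_sub, map_add, map_mul, map_pow, map_ofNat, ge3, ge4, gX4, gX5, gX6]; ring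
    rw [h]
    exact comb_mem memI4 _ (comb_mem memI3 _ (comb_mem memI6 _
      (comb_mem memI5 _ IA.zero_mem)))
  · have h : gBA (-(X 4 ^ 2 * Be4τ) + X 5 ^ 2) =
        (-(X 4 ^ 2)) * (Ae4τ - 2 * X 7 - X 8)
          + ((-1 : A9) * (2 * X 5 * X 7 - X 6 ^ 2 + X 5 * X 8)
          + ((2 * X 7 + X 8) * (X 5 - X 4 ^ 2) + 0)) := by
      simp only [map_neg, map_add, map_mul, map_pow, ge4, gX4, gX5]; ring
    rw [h]
    exact comb_mem memI4 _ (comb_mem memI7 _ (comb_mem memI5 _ IA.zero_mem))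
  · have h : gBA (3 * Be4τ * X 4 ^ 4 - X 4 ^ 8 + 3 * X 6 * (X 6 + Be3τ * X 4)) =
        (3 * X 4 ^ 4) * (Ae4τ - 2 * X 7 - X 8)
          + ((3 * X 4 * X 8) * (Ae3τ - 2 * X 6)
          + ((1 : A9) * (X 7 ^ 2 + X 7 * X 8 + X 8 ^ 2)
          + ((6 * X 4 ^ 4 - X 7 - 2 * X 8 - 2 * X 4 * X 6 + X 5 ^ 2 - 8 * X 4 ^ 2 * X 5)
                * (X 7 - 2 * X 4 * X 6 + X 5 ^ 2 - X 8)
          + ((4 * X 4 ^ 2) * (2 * X 5 * X 7 - X 6 ^ 2 + X 5 * X 8)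
          + ((-(6 * X 4 ^ 4 * (X 5 + X 4 ^ 2))
              - (16 * X 4 ^ 3 * X 6 - 8 * X 4 ^ 2 * (X 5 ^ 2 + X 4 ^ 2 * X 5 + X 4 ^ 4)
                 + 12 * X 4 ^ 2 * X 8 + (X 5 + X 4 ^ 2) * (X 5 ^ 2 + X 4 ^ 4)
                 - 4 * X 4 * X 6 * (X 5 + X 4 ^ 2) - 3 * X 8 * (X 5 + X 4 ^ 2)))
                * (X 5 - X 4 ^ 2) + 0))))) := by
      simp only [map_sub, map_add, map_mul, map_pow, map_ofNat, ge3, ge4, gX4, gX5, gX6]; ring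
    rw [h]
    exact comb_mem memI4 _ (comb_mem memI3 _ (comb_mem memI8 _ (comb_mem memI6 _
      (comb_mem memI7 _ (comb_mem memI5 _ IA.zero_mem)))))
  · have h : gBA (X 6 ^ 3) = X 8 ^ 3 := by simp only [map_pow, gX6]
    rw [h]; exact memI9

/-! ### The induced maps on the quotients -/

noncomputable def Fq : A9 ⧸ IA →+* B7 ⧸ JB :=
  Ideal.Quotient.lift IA ((Ideal.Quotient.mk JB).comp fAB)
    (fun a ha => by
      simp only [RingHom.comp_apply, Ideal.Quotient.eq_zero_iff_mem]
      exact f_mem ha)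

noncomputable def Gq : B7 ⧸ JB →+* A9 ⧸ IA :=
  Ideal.Quotient.lift JB ((Ideal.Quotient.mk IA).comp gBA)
    (fun a ha => by
      simp only [RingHom.comp_apply, Ideal.Quotient.eq_zero_iff_mem]
      exact g_mem ha)

lemma Fq_mk (p : A9) : Fq (Ideal.Quotient.mk IA p) = Ideal.Quotient.mk JB (fAB p) :=
  Ideal.Quotient.lift_mk _ _ _

lemma Gq_mk (p : B7) : Gq (Ideal.Quotient.mk JB p) = Ideal.Quotient.mk IA (gBA p) :=
  Ideal.Quotient.lift_mk _ _ _

theorem quotients_isomorphic : Nonempty ((A9 ⧸ IA) ≃+* (B7 ⧸ JB)) := by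
  refine ⟨RingEquiv.ofRingHom Fq Gq ?_ ?_⟩
  swap
  · -- Gq ∘ Fq = id
    apply Ideal.Quotient.ringHom_ext
    apply MvPolynomial.ringHom_ext
    · intro r
      show Gq (Fq (Ideal.Quotient.mk IA (C r))) = Ideal.Quotient.mk IA (C r)
      rw [show (C r : A9) = (r : A9) from eq_intCast (C.comp (RingHom.id ℤ)) r]
      simp only [map_intCast]
    · intro i
      show Gq (Fq (Ideal.Quotient.mk IA (X i))) = Ideal.Quotient.mk IA (X i)
      rw [Fq_mk]
      fin_cases i
      · show Gq (Ideal.Quotient.mk JB (fAB (X 0))) = Ideal.Quotient.mk IA (X 0)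
        rw [fX0, Gq_mk, gX0]
      · show Gq (Ideal.Quotient.mk JB (fAB (X 1))) = Ideal.Quotient.mk IA (X 1)
        rw [fX1, Gq_mk, gX1]
      · show Gq (Ideal.Quotient.mk JB (fAB (X 2))) = Ideal.Quotient.mk IA (X 2)
        rw [fX2, Gq_mk, gX2]
      · show Gq (Ideal.Quotient.mk JB (fAB (X 3))) = Ideal.Quotient.mk IA (X 3)
        rw [fX3, Gq_mk, gX3]
      · show Gq (Ideal.Quotient.mk JB (fAB (X 4))) = Ideal.Quotient.mk IA (X 4)
        rw [fX4, Gq_mk, gX4]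
      · show Gq (Ideal.Quotient.mk JB (fAB (X 5))) = Ideal.Quotient.mk IA (X 5)
        rw [fX5, Gq_mk, map_pow, gX4]
        rw [Ideal.Quotient.mk_eq_mk_iff_sub_mem]
        have h : (X 4 ^ 2 - X 5 : A9) = (-1 : A9) * (X 5 - X 4 ^ 2) + 0 := by ring
        rw [h]; exact comb_mem memI5 _ IA.zero_mem
      · show Gq (Ideal.Quotient.mk JB (fAB (X 6))) = Ideal.Quotient.mk IA (X 6)
        rw [fX6, Gq_mk, gX5]
      · show Gq (Ideal.Quotient.mk JB (fAB (X 7))) = Ideal.Quotient.mk IA (X 7)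
        rw [fX7, Gq_mk]
        have hg : gBA (2 * X 4 * X 5 - X 4 ^ 4 + X 6) = 2 * X 4 * X 6 - X 4 ^ 4 + X 8 := by
          simp only [map_sub, map_add, map_mul, map_pow, map_ofNat, gX4, gX5, gX6]
        rw [hg, Ideal.Quotient.mk_eq_mk_iff_sub_mem]
        have h : (2 * X 4 * X 6 - X 4 ^ 4 + X 8 - X 7 : A9) =
            (-1 : A9) * (X 7 - 2 * X 4 * X 6 + X 5 ^ 2 - X 8)
              + ((X 5 + X 4 ^ 2) * (X 5 - X 4 ^ 2) + 0) := by ring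
        rw [h]; exact comb_mem memI6 _ (comb_mem memI5 _ IA.zero_mem)
      · show Gq (Ideal.Quotient.mk JB (fAB (X 8))) = Ideal.Quotient.mk IA (X 8)
        rw [fX8, Gq_mk, gX6]
  · -- Fq ∘ Gq = id
    apply Ideal.Quotient.ringHom_ext
    apply MvPolynomial.ringHom_ext
    · intro r
      show Fq (Gq (Ideal.Quotient.mk JB (C r))) = Ideal.Quotient.mk JB (C r)
      rw [show (C r : B7) = (r : B7) from eq_intCast (C.comp (RingHom.id ℤ)) r]
      simp only [map_intCast]
    · intro i
      show Fq (Gq (Ideal.Quotient.mk JB (X i))) = Ideal.Quotient.mk JB (X i)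
      rw [Gq_mk]
      fin_cases i
      · show Fq (Ideal.Quotient.mk IA (gBA (X 0))) = Ideal.Quotient.mk JB (X 0)
        rw [gX0, Fq_mk, fX0]
      · show Fq (Ideal.Quotient.mk IA (gBA (X 1))) = Ideal.Quotient.mk JB (X 1)
        rw [gX1, Fq_mk, fX1]
      · show Fq (Ideal.Quotient.mk IA (gBA (X 2))) = Ideal.Quotient.mk JB (X 2)
        rw [gX2, Fq_mk, fX2]
      · show Fq (Ideal.Quotient.mk IA (gBA (X 3))) = Ideal.Quotient.mk JB (X 3)
        rw [gX3, Fq_mk, fX3]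
      · show Fq (Ideal.Quotient.mk IA (gBA (X 4))) = Ideal.Quotient.mk JB (X 4)
        rw [gX4, Fq_mk, fX4]
      · show Fq (Ideal.Quotient.mk IA (gBA (X 5))) = Ideal.Quotient.mk JB (X 5)
        rw [gX5, Fq_mk, fX6]
      · show Fq (Ideal.Quotient.mk IA (gBA (X 6))) = Ideal.Quotient.mk JB (X 6)
        rw [gX6, Fq_mk, fX8]
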